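/- Let G and G' be groups that are elementarily equivalent in the first-order language of groups, and suppose there exists a natural number N such that every element of the commutator subgroup [G,G] is a product of at most N commutators of elements of G. Then every element of [G',G'] is a product of at most N commutators of elements of G', and the groups [G,G] and [G',G'] are elementarily equivalent in the first-order language of groups. -/

import Mathlib

open FirstOrder
open scoped commutatorElement

/-- The function symbols of the first-order language of groups:
multiplication, inverse, and identity. -/
inductive GroupFunc : ℕ → Type
  | mul : GroupFunc 2
  | inv : GroupFunc 1
  | one : GroupFunc 0

/-- The first-order language of groups. -/
def groupLang : FirstOrder.Language :=
  { Functions := GroupFunc, Relations := fun _ => Empty }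

/-- Any group is a structure for the language of groups in the natural way. -/
instance groupLangStructure (G : Type*) [Group G] : groupLang.Structure G where
  funMap {_} f v :=
    match f with
    | GroupFunc.mul => v 0 * v 1
    | GroupFunc.inv => (v 0)⁻¹
    | GroupFunc.one => 1
  RelMap {_} r := r.elim

/-- Two groups are elementarily equivalent in the first-order language of groups
if they satisfy exactly the same first-order sentences of the group language. -/
def GroupElemEquiv (G H : Type*) [Group G] [Group H] : Prop :=
  groupLang.ElementarilyEquivalent G H

/-- Two rings are elementarily equivalent in the first-order language of rings
if they satisfy exactly the same first-order sentences of the ring language. -/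
def RingElemEquiv (R S : Type*) [Ring R] [Ring S] : Prop :=
  letI := FirstOrder.Ring.compatibleRingOfRing R
  letI := FirstOrder.Ring.compatibleRingOfRing S
  FirstOrder.Language.ring.ElementarilyEquivalent R S

/-- `g` is a product of at most `N` commutators of elements of `G`. -/
def IsProdOfAtMostNCommutators {G : Type*} [Group G] (N : ℕ) (g : G) : Prop :=
  ∃ l : List (G × G), l.length ≤ N ∧ g = (l.map fun q => ⁅q.1, q.2⁆).prod

namespace CommEE
open FirstOrder.Language

def tmul {α} (t₁ t₂ : groupLang.Term α) : groupLang.Term α := Term.func GroupFunc.mul ![t₁, t₂]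
def tinv {α} (t : groupLang.Term α) : groupLang.Term α := Term.func GroupFunc.inv ![t]
def tone {α} : groupLang.Term α := Term.func GroupFunc.one ![]
def tcomm {α} (t₁ t₂ : groupLang.Term α) : groupLang.Term α :=
  tmul (tmul (tmul t₁ t₂) (tinv t₁)) (tinv t₂)

variable {G : Type*} [Group G]

@[simp] lemma realize_tmul {α} (t₁ t₂ : groupLang.Term α) (v : α → G) :
    (tmul t₁ t₂).realize v = t₁.realize v * t₂.realize v := rfl

@[simp] lemma realize_tinv {α} (t : groupLang.Term α) (v : α → G) :
    (tinv t).realize v = (t.realize v)⁻¹ := rfl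

@[simp] lemma realize_tone {α} (v : α → G) : (tone : groupLang.Term α).realize v = 1 := rfl

@[simp] lemma realize_tcomm {α} (t₁ t₂ : groupLang.Term α) (v : α → G) :
    (tcomm t₁ t₂).realize v = ⁅t₁.realize v, t₂.realize v⁆ := rfl

def prodTerms {α} (ts : List (groupLang.Term α)) : groupLang.Term α := ts.foldr tmul tone

@[simp] lemma realize_prodTerms {α} (ts : List (groupLang.Term α)) (v : α → G) :
    (prodTerms ts).realize v = (ts.map fun t => t.realize v).prod := by
  induction ts with
  | nil => simp [prodTerms]
  | cons t ts ih =>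
    rw [show prodTerms (t::ts) = tmul t (prodTerms ts) from rfl, realize_tmul, ih,
      List.map_cons, List.prod_cons]

/-- `phiFml N` : "x is a product of exactly N commutators". -/
def phiFml (N : ℕ) : groupLang.Formula Unit :=
  (Term.bdEqual (Term.var (Sum.inl ()))
    (prodTerms (List.ofFn fun i : Fin N =>
      tcomm (Term.var (Sum.inr (⟨2*i, by have := i.isLt; omega⟩ : Fin (2*N))))
            (Term.var (Sum.inr (⟨2*i+1, by have := i.isLt; omega⟩ : Fin (2*N))))))).exs

lemma prod_ofFn_getD (l : List (G × G)) :
    ∀ N, l.length ≤ N →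
      (List.ofFn fun i : Fin N => ⁅(l.getD i (1,1)).1, (l.getD i (1,1)).2⁆).prod
        = (l.map fun q => ⁅q.1, q.2⁆).prod := by
  induction l with
  | nil =>
    intro N _
    simp only [List.getD_nil]
    refine List.prod_eq_one fun x hx => ?_
    rw [List.mem_ofFn] at hx
    obtain ⟨i, rfl⟩ := hx
    simp
  | cons q l ih =>
    intro N hN
    cases N with
    | zero => simp at hN
    | succ N =>
      rw [List.ofFn_succ]
      simp only [Fin.val_zero, List.getD_cons_zero, Fin.val_succ, List.getD_cons_succ]
      rw [List.prod_cons, ih N (by simpa using hN)]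
      simp

lemma isProd_iff_exists_fn (N : ℕ) (g : G) :
    IsProdOfAtMostNCommutators N g ↔
      ∃ f : Fin N → G × G, g = (List.ofFn fun i => ⁅(f i).1, (f i).2⁆).prod := by
  constructor
  · rintro ⟨l, hl, rfl⟩
    exact ⟨fun i => l.getD i (1,1), (prod_ofFn_getD l N hl).symm⟩
  · rintro ⟨f, rfl⟩
    refine ⟨List.ofFn f, by simp, ?_⟩
    rw [List.map_ofFn]
    rfl

lemma realize_phiFml (N : ℕ) (g : G) :
    (phiFml N).Realize (fun _ : Unit => g) ↔ IsProdOfAtMostNCommutators N g := by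
  rw [isProd_iff_exists_fn, phiFml, BoundedFormula.realize_exs]
  constructor
  · rintro ⟨xs, hxs⟩
    rw [BoundedFormula.realize_bdEqual] at hxs
    refine ⟨fun i => (xs ⟨2*i, by omega⟩, xs ⟨2*i+1, by omega⟩), ?_⟩
    simpa [Function.comp_def] using hxs
  · rintro ⟨f, rfl⟩
    refine ⟨fun j => if (j : ℕ) % 2 = 0 then (f ⟨(j : ℕ)/2, by have := j.isLt; omega⟩).1
      else (f ⟨(j : ℕ)/2, by have := j.isLt; omega⟩).2, ?_⟩
    rw [BoundedFormula.realize_bdEqual]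
    simp only [Term.realize_var, Sum.elim_inl, realize_prodTerms, List.map_ofFn]
    congr 1
    congr 1
    funext i
    simp only [Function.comp_apply, realize_tcomm, Term.realize_var, Sum.elim_inr]
    have h1 : (2 * (i:ℕ)) % 2 = 0 := by omega
    have h2 : ¬((2 * (i:ℕ) + 1) % 2 = 0) := by omega
    rw [if_pos h1, if_neg h2]
    congr 2 <;> (congr 1; exact Fin.ext (by simp only [Fin.val_mk]; omega))


/-- Apply a one-variable formula to a term. -/
def applyFml {n : ℕ} (φ : groupLang.Formula Unit) (t : groupLang.Term (Empty ⊕ Fin n)) :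
    groupLang.BoundedFormula Empty n :=
  (φ.subst fun _ => t).relabel (id : Empty ⊕ Fin n → Empty ⊕ Fin n)

lemma realize_applyFml {n : ℕ} (φ : groupLang.Formula Unit) (t : groupLang.Term (Empty ⊕ Fin n))
    (v : Empty → G) (xs : Fin n → G) :
    (applyFml φ t).Realize v xs ↔ φ.Realize (fun _ : Unit => t.realize (Sum.elim v xs)) := by
  rw [applyFml]
  rw [BoundedFormula.realize_relabel, BoundedFormula.realize_subst]
  have h1 : (Sum.elim v (xs ∘ Fin.castAdd 0) ∘ (id : Empty ⊕ Fin n → Empty ⊕ Fin n))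
      = Sum.elim v xs := by
    funext a
    cases a with
    | inl e => exact e.elim
    | inr i => simp [Fin.castAdd]
  rw [h1]
  rw [Formula.Realize]
  exact iff_of_eq (congrArg _ (Subsingleton.elim _ _))

/-- Relativization of a formula to the set defined by φ. -/
def relativize (φ : groupLang.Formula Unit) : ∀ {n}, groupLang.BoundedFormula Empty n →
    groupLang.BoundedFormula Empty n
  | _, BoundedFormula.falsum => BoundedFormula.falsum
  | _, BoundedFormula.equal t₁ t₂ => BoundedFormula.equal t₁ t₂
  | _, BoundedFormula.rel R ts => BoundedFormula.rel R ts
  | _, BoundedFormula.imp f₁ f₂ => (relativize φ f₁).imp (relativize φ f₂)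
  | n, BoundedFormula.all f =>
      ((applyFml φ (Term.var (Sum.inr (Fin.last n)))).imp (relativize φ f)).all

lemma realize_term_coe (H : Subgroup G) {α} (t : groupLang.Term α) (v : α → H) :
    t.realize (fun a => ((v a : G))) = ((t.realize v : H) : G) := by
  induction t with
  | var => rfl
  | func f ts ih =>
    cases f with
    | mul =>
      show Term.realize _ (ts 0) * Term.realize _ (ts 1) = ((_ * _ : H) : G)
      rw [ih 0, ih 1]; rfl
    | inv =>
      show (Term.realize _ (ts 0))⁻¹ = _
      rw [ih 0]; rfl
    | one => rfl

lemma realize_relativize (H : Subgroup G) (φ : groupLang.Formula Unit)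
    (hφ : ∀ x : G, x ∈ H ↔ φ.Realize (fun _ : Unit => x)) :
    ∀ {n} (ψ : groupLang.BoundedFormula Empty n) (v : Empty → G) (v' : Empty → H)
      (xs : Fin n → H),
    (relativize φ ψ).Realize v (fun i => ((xs i : G))) ↔ ψ.Realize v' xs := by
  intro n ψ
  induction ψ with
  | falsum => intro v v' xs; exact Iff.rfl
  | equal t₁ t₂ =>
    intro v v' xs
    change (Term.realize (Sum.elim v fun i => ((xs i : G))) t₁
        = Term.realize (Sum.elim v fun i => ((xs i : G))) t₂)
      ↔ (Term.realize (Sum.elim v' xs) t₁ = Term.realize (Sum.elim v' xs) t₂)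
    have h : ∀ t : groupLang.Term (Empty ⊕ Fin _),
        t.realize (Sum.elim v fun i => ((xs i : G)))
          = ((t.realize (Sum.elim v' xs) : H) : G) := by
      intro t
      rw [← realize_term_coe H t (Sum.elim v' xs)]
      congr 1
      funext a
      cases a with
      | inl e => exact e.elim
      | inr i => rfl
    rw [h t₁, h t₂, Subtype.coe_inj]
  | rel R ts => exact R.elim
  | imp f₁ f₂ ih₁ ih₂ =>
    intro v v' xs
    simp only [relativize, BoundedFormula.realize_imp, ih₁ v v', ih₂ v v']
  | @all m f ih =>
    intro v v' xs
    simp only [relativize, BoundedFormula.realize_all, BoundedFormula.realize_imp]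
    constructor
    · intro h x
      have hx := h (x : G)
      rw [realize_applyFml] at hx
      simp only [Term.realize_var, Sum.elim_inr, Fin.snoc_last] at hx
      have := hx ((hφ (x : G)).1 x.2)
      rw [show (Fin.snoc (fun i => ((xs i : G))) ((x : G)) : Fin (m+1) → G)
          = fun i => (((Fin.snoc xs x : Fin (m+1) → H) i : G)) from
        (Fin.comp_snoc (fun y : H => (y : G)) xs x).symm] at this
      exact (ih v v' (Fin.snoc xs x)).1 this
    · intro h x
      rw [realize_applyFml]
      simp only [Term.realize_var, Sum.elim_inr, Fin.snoc_last]
      intro hx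
      have hxH : x ∈ H := (hφ x).2 hx
      have := (ih v v' (Fin.snoc xs ⟨x, hxH⟩)).2 (h ⟨x, hxH⟩)
      rw [show (fun i => (((Fin.snoc xs ⟨x, hxH⟩ : Fin (m+1) → H) i : G)))
          = (Fin.snoc (fun i => ((xs i : G))) x : Fin (m+1) → G) from
        Fin.comp_snoc (fun y : H => (y : G)) xs ⟨x, hxH⟩] at this
      exact this

lemma sentence_relativize (H : Subgroup G) (φ : groupLang.Formula Unit)
    (hφ : ∀ x : G, x ∈ H ↔ φ.Realize (fun _ : Unit => x)) (σ : groupLang.Sentence) :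
    H ⊨ σ ↔ G ⊨ relativize φ σ := by
  have h := realize_relativize H φ hφ σ default default default
  rw [Subsingleton.elim (fun i : Fin 0 => (((default : Fin 0 → H) i : G)))
    (default : Fin 0 → G)] at h
  exact h.symm

lemma mem_commutator_of_isProd {M : ℕ} {g : G} (h : IsProdOfAtMostNCommutators M g) :
    g ∈ commutator G := by
  obtain ⟨l, -, rfl⟩ := h
  refine Subgroup.list_prod_mem _ fun x hx => ?_
  rw [List.mem_map] at hx
  obtain ⟨q, -, rfl⟩ := hx
  rw [commutator_def]
  exact Subgroup.commutator_mem_commutator (Subgroup.mem_top _) (Subgroup.mem_top _)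

lemma isProd_inv {M : ℕ} {g : G} (h : IsProdOfAtMostNCommutators M g) :
    IsProdOfAtMostNCommutators M g⁻¹ := by
  obtain ⟨l, hl, rfl⟩ := h
  refine ⟨l.reverse.map Prod.swap, by simpa using hl, ?_⟩
  rw [List.prod_inv_reverse]
  simp only [List.map_map, List.map_reverse]
  congr 3
  funext q
  simp [commutatorElement_inv]

lemma isProd_mul {M M' : ℕ} {g g' : G} (h : IsProdOfAtMostNCommutators M g)
    (h' : IsProdOfAtMostNCommutators M' g') :
    IsProdOfAtMostNCommutators (M + M') (g * g') := by
  obtain ⟨l, hl, rfl⟩ := h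
  obtain ⟨l', hl', rfl⟩ := h'
  exact ⟨l ++ l', by simp; omega, by rw [List.map_append, List.prod_append]⟩

/-- "every commutator is a product of at most N commutators" -/
def sigmaComm (N : ℕ) : groupLang.Sentence :=
  ((applyFml (phiFml N) (tcomm (Term.var (Sum.inr 0)) (Term.var (Sum.inr 1)))).all).all

/-- "every product of at most 2N commutators is a product of at most N commutators" -/
def sigmaMul (N : ℕ) : groupLang.Sentence :=
  ((applyFml (phiFml (2*N)) (Term.var (Sum.inr 0))).imp
    (applyFml (phiFml N) (Term.var (Sum.inr 0)))).all

lemma realize_sigmaComm (N : ℕ) :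
    (G ⊨ sigmaComm N) ↔ ∀ x y : G, IsProdOfAtMostNCommutators N ⁅x, y⁆ := by
  rw [sigmaComm, Sentence.Realize, Formula.Realize]
  simp only [BoundedFormula.realize_all]
  constructor
  · intro h x y
    have := h x y
    rw [realize_applyFml, realize_phiFml] at this
    simpa [Fin.snoc] using this
  · intro h x y
    rw [realize_applyFml, realize_phiFml]
    simpa [Fin.snoc] using h x y

lemma realize_sigmaMul (N : ℕ) :
    (G ⊨ sigmaMul N) ↔
      ∀ x : G, IsProdOfAtMostNCommutators (2*N) x → IsProdOfAtMostNCommutators N x := by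
  rw [sigmaMul, Sentence.Realize, Formula.Realize]
  simp only [BoundedFormula.realize_all, BoundedFormula.realize_imp]
  constructor
  · intro h x hx
    have := h x
    rw [realize_applyFml, realize_phiFml, realize_applyFml, realize_phiFml] at this
    simpa [Fin.snoc] using this (by simpa [Fin.snoc] using hx)
  · intro h x
    rw [realize_applyFml, realize_phiFml, realize_applyFml, realize_phiFml]
    intro hx
    simpa [Fin.snoc] using h x (by simpa [Fin.snoc] using hx)

end CommEE

/-- If `G` and `G'` are elementarily equivalent groups and every element of `[G,G]` is a
product of at most `N` commutators of elements of `G`, then every element of `[G',G']` is a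
product of at most `N` commutators of elements of `G'`, and the commutator subgroups
`[G,G]` and `[G',G']` are elementarily equivalent in the first-order language of groups. -/
theorem commutator_elementarilyEquivalent_of_elementarilyEquivalent
    (G G' : Type) [Group G] [Group G']
    (heq : GroupElemEquiv G G') (N : ℕ)
    (hG : ∀ g ∈ commutator G, IsProdOfAtMostNCommutators N g) :
    (∀ g ∈ commutator G', IsProdOfAtMostNCommutators N g) ∧
      GroupElemEquiv (commutator G) (commutator G') := by
  have hiff : ∀ σ : groupLang.Sentence, G ⊨ σ ↔ G' ⊨ σ :=
    fun σ => Language.elementarilyEquivalent_iff.1 heq σ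
  have hc : G ⊨ CommEE.sigmaComm N := (CommEE.realize_sigmaComm N).2 fun x y =>
    hG _ (by
      rw [commutator_def]
      exact Subgroup.commutator_mem_commutator (Subgroup.mem_top _) (Subgroup.mem_top _))
  have hm : G ⊨ CommEE.sigmaMul N := (CommEE.realize_sigmaMul N).2 fun x hx =>
    hG _ (CommEE.mem_commutator_of_isProd hx)
  have hc' := (CommEE.realize_sigmaComm N).1 ((hiff _).1 hc)
  have hm' := (CommEE.realize_sigmaMul N).1 ((hiff _).1 hm)
  let S' : Subgroup G' :=
    { carrier := {g | IsProdOfAtMostNCommutators N g}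
      one_mem' := ⟨[], Nat.zero_le _, by simp⟩
      mul_mem' := fun {a b} ha hb => hm' _ (by
        rw [two_mul]
        exact CommEE.isProd_mul ha hb)
      inv_mem' := fun {a} ha => CommEE.isProd_inv ha }
  have part1 : ∀ g ∈ commutator G', IsProdOfAtMostNCommutators N g := by
    intro g hg
    have hle : commutator G' ≤ S' := by
      rw [commutator_def]
      exact Subgroup.commutator_le.2 fun a _ b _ => hc' a b
    exact hle hg
  refine ⟨part1, ?_⟩
  have hφG : ∀ x : G, x ∈ commutator G ↔ (CommEE.phiFml N).Realize (fun _ : Unit => x) :=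
    fun x => ⟨fun hx => (CommEE.realize_phiFml N x).2 (hG x hx),
      fun hx => CommEE.mem_commutator_of_isProd ((CommEE.realize_phiFml N x).1 hx)⟩
  have hφG' : ∀ x : G', x ∈ commutator G' ↔ (CommEE.phiFml N).Realize (fun _ : Unit => x) :=
    fun x => ⟨fun hx => (CommEE.realize_phiFml N x).2 (part1 x hx),
      fun hx => CommEE.mem_commutator_of_isProd ((CommEE.realize_phiFml N x).1 hx)⟩
  refine Language.elementarilyEquivalent_iff.2 fun σ => ?_
  rw [CommEE.sentence_relativize (commutator G) (CommEE.phiFml N) hφG σ,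
      CommEE.sentence_relativize (commutator G') (CommEE.phiFml N) hφG' σ]
  exact hiff _
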